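/- Let h_c > 0 and let x_+ : [v_0, ∞) → (0, ∞) be continuous and strictly decreasing with lim_{v→∞} x_+(v) = 0. Suppose x : [v_0, ∞) → ℝ is differentiable, satisfies x(v_0) ≤ 0, and dx/dv = (h_c/2)(x(v) - x_+(v)) x(v) for all v ≥ v_0. Then x(v) ≤ 0 for all v ≥ v_0, x is nondecreasing, and lim_{v→∞} x(v) = 0. -/

import Mathlib

open Set Filter intervalIntegral

/-- Lemma 3.1 (Case 1, constant `h = h_c`): if `x₊ > 0` is continuous, strictly
decreasing with `x₊ → 0`, and `x` solves `dx/dv = (h_c/2)(x - x₊(v)) x` on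
`[v₀, ∞)` with `x(v₀) ≤ 0`, then `x ≤ 0`, `x` is nondecreasing, and `x → 0`. -/
theorem stmt19 (hc v0 : ℝ) (hhc : 0 < hc)
    (xp : ℝ → ℝ)
    (hcont : ContinuousOn xp (Set.Ici v0))
    (hpos : ∀ v ∈ Set.Ici v0, 0 < xp v)
    (hanti : StrictAntiOn xp (Set.Ici v0))
    (hlim : Filter.Tendsto xp Filter.atTop (nhds 0))
    (x : ℝ → ℝ)
    (hderiv : ∀ v ∈ Set.Ici v0, HasDerivAt x (hc / 2 * (x v - xp v) * x v) v)
    (hx0 : x v0 ≤ 0) :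
    (∀ v ∈ Set.Ici v0, x v ≤ 0) ∧ MonotoneOn x (Set.Ici v0) ∧
    Filter.Tendsto x Filter.atTop (nhds 0) := by
  have hxc : ContinuousOn x (Set.Ici v0) := fun v hv =>
    ((hderiv v hv).continuousAt).continuousWithinAt
  set g : ℝ → ℝ := fun v => hc / 2 * (x v - xp v) with hg
  have hgc : ContinuousOn g (Set.Ici v0) :=
    continuousOn_const.mul (hxc.sub hcont)
  have hint : ∀ u ∈ Set.Ici v0, IntervalIntegrable g MeasureTheory.volume v0 u := by
    intro u hu
    apply ContinuousOn.intervalIntegrable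
    apply hgc.mono
    rw [Set.uIcc_of_le hu.out]
    exact Set.Icc_subset_Ici_self
  set G : ℝ → ℝ := fun v => ∫ t in v0..v, g t with hGdef
  have hGd : ∀ v ∈ Set.Ioi v0, HasDerivAt G (g v) v := by
    intro v hv
    exact intervalIntegral.integral_hasDerivAt_right (hint v (Set.mem_Ici.mpr (le_of_lt (Set.mem_Ioi.mp hv))))
      ((hgc.mono Set.Ioi_subset_Ici_self).stronglyMeasurableAtFilter isOpen_Ioi v hv)
      (hgc.continuousAt (Ici_mem_nhds hv))
  have hGc : ContinuousOn G (Set.Ici v0) := by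
    intro v hv
    have hle : v0 ≤ v + 1 := by linarith [hv.out]
    have h1 : ContinuousOn G (Set.uIcc v0 (v + 1)) := by
      apply intervalIntegral.continuousOn_primitive_interval
      rw [Set.uIcc_of_le hle]
      exact (hgc.mono Set.Icc_subset_Ici_self).integrableOn_Icc
    rw [Set.uIcc_of_le hle] at h1
    have hmem : Set.Icc v0 (v + 1) ∈ nhdsWithin v (Set.Ici v0) := by
      rw [show Set.Icc v0 (v + 1) = Set.Ici v0 ∩ Set.Iic (v + 1) from rfl]
      exact Filter.inter_mem self_mem_nhdsWithin
        (mem_nhdsWithin_of_mem_nhds (Iic_mem_nhds (by linarith [hv.out])))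
    exact (h1 v ⟨hv, by linarith [hv.out]⟩).mono_of_mem_nhdsWithin hmem
  set y : ℝ → ℝ := fun v => x v * Real.exp (-(G v)) with hy
  have hyd : ∀ v ∈ Set.Ioi v0, HasDerivAt y 0 v := by
    intro v hv
    have h1 := (hderiv v (Set.mem_Ici.mpr (le_of_lt (Set.mem_Ioi.mp hv)))).mul ((hGd v hv).neg.exp)
    refine h1.congr_deriv ?_
    simp only [hg]
    ring
  have hyc : ContinuousOn y (Set.Ici v0) :=
    hxc.mul (hGc.neg.rexp)
  -- key: x ≤ 0 on Ici v0
  have key : ∀ v ∈ Set.Ici v0, x v ≤ 0 := by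
    intro b hb
    rcases eq_or_lt_of_le hb.out with h | h
    · rwa [← h]
    have hconst : ∀ a ∈ Set.Ioc v0 b, y b = y a := by
      intro a ha
      have := constant_of_has_deriv_right_zero
        (f := y) (a := a) (b := b)
        (hyc.mono (Set.Icc_subset_Ici_self.trans (Set.Ici_subset_Ici.mpr (le_of_lt ha.1))))
        (fun t ht => (hyd t (lt_of_lt_of_le ha.1 ht.1)).hasDerivWithinAt)
      exact this b ⟨ha.2, le_rfl⟩
    have hyb : y b = y v0 := by
      have hne : (nhdsWithin v0 (Set.Ioi v0)).NeBot := nhdsGT_neBot v0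
      have h1 : Filter.Tendsto y (nhdsWithin v0 (Set.Ioi v0)) (nhds (y v0)) :=
        (hyc v0 Set.self_mem_Ici).mono_left (nhdsWithin_mono _ Set.Ioi_subset_Ici_self)
      have h2 : Filter.Tendsto y (nhdsWithin v0 (Set.Ioi v0)) (nhds (y b)) := by
        apply Filter.Tendsto.congr' _ tendsto_const_nhds
        filter_upwards [Filter.inter_mem (self_mem_nhdsWithin)
          (mem_nhdsWithin_of_mem_nhds (Iic_mem_nhds h))] with t ht
        exact (hconst t ⟨ht.1, ht.2⟩)
      exact tendsto_nhds_unique h2 h1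
    have hG0 : G v0 = 0 := intervalIntegral.integral_same
    have hyv0 : y v0 = x v0 := by simp [hy, hG0]
    have hyble : x b * Real.exp (-(G b)) ≤ 0 := by
      have : y b ≤ 0 := by rw [hyb, hyv0]; exact hx0
      simpa [hy] using this
    have hexp := Real.exp_pos (-(G b))
    by_contra hposb
    push_neg at hposb
    nlinarith [mul_pos hposb hexp]
  -- monotonicity
  have hmono : MonotoneOn x (Set.Ici v0) := by
    apply monotoneOn_of_deriv_nonneg (convex_Ici v0) hxc
    · intro v hv
      rw [interior_Ici] at hv
      exact ((hderiv v (Set.mem_Ici.mpr (le_of_lt (Set.mem_Ioi.mp hv)))).differentiableAt).differentiableWithinAt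
    · intro v hv
      rw [interior_Ici] at hv
      rw [(hderiv v (Set.mem_Ici.mpr (le_of_lt (Set.mem_Ioi.mp hv)))).deriv]
      have h1 := key v (Set.mem_Ici.mpr (le_of_lt (Set.mem_Ioi.mp hv)))
      have h2 := hpos v (Set.mem_Ici.mpr (le_of_lt (Set.mem_Ioi.mp hv)))
      nlinarith [mul_nonneg (mul_nonneg (by linarith : (0:ℝ) ≤ hc / 2)
        (by linarith : (0:ℝ) ≤ xp v - x v)) (by linarith : (0:ℝ) ≤ -x v)]
  refine ⟨key, hmono, ?_⟩
  -- limit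
  set xt : ℝ → ℝ := fun v => x (max v v0) with hxt
  have hxtm : Monotone xt := fun u v huv =>
    hmono (le_max_right u v0) (le_max_right v v0) (max_le_max huv le_rfl)
  have hbdd : BddAbove (Set.range xt) :=
    ⟨0, by rintro _ ⟨v, rfl⟩; exact key _ (le_max_right v v0)⟩
  have htend : Filter.Tendsto xt Filter.atTop (nhds (⨆ v, xt v)) :=
    tendsto_atTop_ciSup hxtm hbdd
  set L : ℝ := ⨆ v, xt v with hL
  have hLle : L ≤ 0 := ciSup_le fun v => key _ (le_max_right v v0)
  have hxle : ∀ v, xt v ≤ L := fun v => le_ciSup hbdd v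
  have hxteq : ∀ v ∈ Set.Ici v0, xt v = x v := by
    intro v hv
    simp only [hxt]
    rw [max_eq_left hv.out]
  have hL0 : L = 0 := by
    by_contra hne
    have hLlt : L < 0 := lt_of_le_of_ne hLle hne
    set c : ℝ := hc / 2 * (L * L) with hcdef
    have hcpos : 0 < c := mul_pos (by linarith) (mul_pos_of_neg_of_neg hLlt hLlt)
    have hxleL : ∀ v ∈ Set.Ici v0, x v ≤ L := by
      intro v hv
      have h := hxle v
      rwa [hxteq v hv] at h
    -- derivative lower bound
    have hdlb : ∀ v ∈ Set.Ici v0, c ≤ hc / 2 * (x v - xp v) * x v := by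
      intro v hv
      have h1 := hxleL v hv
      have h2 := hpos v hv
      have h3 : x v - xp v ≤ L := by linarith
      nlinarith [mul_nonneg (sub_nonneg.2 h3) (neg_nonneg.2 (h1.trans hLlt.le)),
        mul_nonneg (neg_nonneg.2 hLlt.le) (sub_nonneg.2 h1)]
    set z : ℝ → ℝ := fun v => x v - c * v with hz
    have hzd : ∀ v ∈ Set.Ici v0, HasDerivAt z (hc / 2 * (x v - xp v) * x v - c) v := by
      intro v hv
      have h0 : HasDerivAt (fun t : ℝ => c * t) c v := by
        simpa using (hasDerivAt_id v).const_mul c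
      exact (hderiv v hv).sub h0
    have hzc : ContinuousOn z (Set.Ici v0) :=
      hxc.sub (continuousOn_const.mul continuousOn_id)
    have hzm : MonotoneOn z (Set.Ici v0) := by
      apply monotoneOn_of_deriv_nonneg (convex_Ici v0) hzc
      · intro v hv
        rw [interior_Ici] at hv
        exact ((hzd v (Set.mem_Ici.mpr (le_of_lt (Set.mem_Ioi.mp hv)))).differentiableAt).differentiableWithinAt
      · intro v hv
        rw [interior_Ici] at hv
        rw [(hzd v (Set.mem_Ici.mpr (le_of_lt (Set.mem_Ioi.mp hv)))).deriv]
        have := hdlb v (Set.mem_Ici.mpr (le_of_lt (Set.mem_Ioi.mp hv)))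
        linarith
    set V : ℝ := max v0 (v0 + (L - x v0) / c + 1) with hV
    have hV1 : v0 ≤ V := le_max_left _ _
    have hV2 : v0 + (L - x v0) / c + 1 ≤ V := le_max_right _ _
    have hzV : z v0 ≤ z V := hzm Set.self_mem_Ici hV1 hV1
    have hxV := hxleL V hV1
    simp only [hz] at hzV
    have hmul : c * (v0 + (L - x v0) / c + 1) = c * v0 + (L - x v0) + c := by
      field_simp
    have h3 : c * v0 + (L - x v0) + c ≤ c * V := by
      rw [← hmul]; exact mul_le_mul_of_nonneg_left hV2 hcpos.le
    linarith
  rw [hL0] at htend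
  apply htend.congr'
  filter_upwards [Filter.eventually_ge_atTop v0] with v hv
  exact hxteq v hv
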